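/- arXiv:1608.06265 — 3 statements merged into one kernel-verified Lean document; each statement's English description precedes it below -/
import Mathlib

section
/- Let Γ₀ be the group with presentation ⟨s₀, s₁, s₂ ∣ s₀⁷, s₁⁷, s₂⁷, s₀ s₁ s₂³, s₀³ s₁³ s₂⟩. Then the abelianization Γ₀/[Γ₀, Γ₀] has exactly 7 elements, and the derived subgroup [Γ₀, Γ₀] is perfect, i.e. [[Γ₀, Γ₀], [Γ₀, Γ₀]] = [Γ₀, Γ₀]. -/
lemma commAux {A : Type*} [CommGroup A] (X Y Z : A) (hZ : Z^7 = 1)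
    (h1 : X*Y*Z^3 = 1) (h2 : X^3*Y^3*Z = 1) : X*Y = 1 ∧ Z = 1 := by
  rw [← mul_pow] at h2
  have hXY : X*Y = (Z^3)⁻¹ := eq_inv_of_mul_eq_one_left h1
  rw [hXY] at h2
  have h8 : Z^8 = 1 := by
    have : Z^8 = ((Z ^ 3)⁻¹ ^ 3 * Z)⁻¹ := by group
    rw [this, h2, inv_one]
  have hZ1 : Z = 1 := by
    have : Z = Z^8 * (Z^7)⁻¹ := by group
    rw [this, h8, hZ]; simp
  refine ⟨?_, hZ1⟩
  rw [hXY, hZ1]; simp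

lemma cert {A : Type*} [AddCommGroup A] (b0 b1 b2 b3 b4 b5 b6 : A)
    (r0 : 2•b0 + 3•b1 + 3•b2 = 0) (r1 : 2•b1 + 3•b2 + 3•b3 = 0)
    (r2 : 2•b2 + 3•b3 + 3•b4 = 0) (r4 : 2•b4 + 3•b5 + 3•b6 = 0)
    (r5 : 2•b5 + 3•b6 + 3•b0 = 0) (r6 : 2•b6 + 3•b0 + 3•b1 = 0)
    (t0 : 7•b0 = 0) (t1 : 7•b1 = 0) (t2 : 7•b2 = 0) (t3 : 7•b3 = 0)
    (t4 : 7•b4 = 0) (t5 : 7•b5 = 0) (t6 : 7•b6 = 0) : b0 = 0 := by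
  have key : b0 = 6•(2•b0 + 3•b1 + 3•b2) + 3•(2•b1 + 3•b2 + 3•b3) + 4•(2•b2 + 3•b3 + 3•b4)
      + (2•b4 + 3•b5 + 3•b6) + 2•(2•b5 + 3•b6 + 3•b0) + 6•(2•b6 + 3•b0 + 3•b1)
      - (5•(7•b0) + 6•(7•b1) + 5•(7•b2) + 3•(7•b3) + 2•(7•b4) + (7•b5) + 3•(7•b6)) := by
    abel
  rw [r0, r1, r2, r4, r5, r6, t0, t1, t2, t3, t4, t5, t6] at key
  simpa using key

/-- Multiplicative version of `cert` in a commutative group. -/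
lemma certMul {A : Type*} [CommGroup A] (b : ℕ → A)
    (r : ∀ n, b n ^ 2 * b (n+1) ^ 3 * b (n+2) ^ 3 = 1)
    (t : ∀ n, b n ^ 7 = 1) (hper : ∀ n, b (7 + n) = b n) : b 0 = 1 := by
  have R : ∀ n, (2 • Additive.ofMul (b n)) + (3 • Additive.ofMul (b (n+1)))
      + (3 • Additive.ofMul (b (n+2))) = 0 := by
    intro n
    have := r n
    simpa [← ofMul_pow, ← ofMul_mul] using congrArg Additive.ofMul this
  have T : ∀ n, (7 : ℕ) • Additive.ofMul (b n) = 0 := by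
    intro n
    simpa [← ofMul_pow] using congrArg Additive.ofMul (t n)
  have h7 : b 7 = b 0 := hper 0
  have h8 : b 8 = b 1 := hper 1
  have key : Additive.ofMul (b 0) = 0 := by
    refine cert (Additive.ofMul (b 0)) (Additive.ofMul (b 1)) (Additive.ofMul (b 2))
      (Additive.ofMul (b 3)) (Additive.ofMul (b 4)) (Additive.ofMul (b 5)) (Additive.ofMul (b 6))
      (R 0) (R 1) (R 2) (R 4) ?_ ?_ (T 0) (T 1) (T 2) (T 3) (T 4) (T 5) (T 6)
    · have := R 5; rwa [h7] at this
    · have := R 6; rwa [h7, h8] at this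
  simpa using congrArg Additive.toMul key


lemma coreLemma {Q : Type*} [Group Q]
    (hc : ∀ a ∈ commutator Q, ∀ b ∈ commutator Q, a * b = b * a)
    (x y z : Q) (hx : x^7 = 1) (hz : z^7 = 1)
    (h1 : x*y*z^3 = 1) (h2 : x^3*y^3*z = 1) : x*y = 1 ∧ z = 1 := by
  -- memberships via abelianization
  obtain ⟨hXY, hZ⟩ := commAux (Abelianization.of x) (Abelianization.of y) (Abelianization.of z)
    (by simp only [← map_pow]; rw [hz, map_one])
    (by simp only [← map_pow, ← map_mul]; rw [h1, map_one])
    (by simp only [← map_pow, ← map_mul]; rw [h2, map_one])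
  have hu : x * y ∈ commutator Q := by
    rw [← QuotientGroup.eq_one_iff (x*y)]
    rw [← map_mul] at hXY
    exact hXY
  have hzm : z ∈ commutator Q := (QuotientGroup.eq_one_iff z).mp hZ
  set c : ℕ → Q := fun n => x^n * (x*y) * (x^n)⁻¹ with hc_def
  set d : ℕ → Q := fun n => x^n * z * (x^n)⁻¹ with hd_def
  have hcm : ∀ n, c n ∈ commutator Q := fun n =>
    Subgroup.Normal.conj_mem inferInstance (x*y) hu (x^n)
  have hdm : ∀ n, d n ∈ commutator Q := fun n =>
    Subgroup.Normal.conj_mem inferInstance z hzm (x^n)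
  have hshift : ∀ n k, c (n + k) = x^n * c k * (x^n)⁻¹ := by
    intro n k; simp only [hc_def, pow_add]; group
  have hdshift : ∀ n k, d (n + k) = x^n * d k * (x^n)⁻¹ := by
    intro n k; simp only [hd_def, pow_add]; group
  have hcper : ∀ n, c (7 + n) = c n := by
    intro n; rw [hshift 7 n, hx]; simp
  have hA : ∀ n, c n * (d n)^3 = 1 := by
    intro n
    have e : c n * (d n)^3 = x^n * (x*y*z^3) * (x^n)⁻¹ := by
      simp only [hc_def, hd_def, conj_pow]
      group
      try simp [pow_three, mul_assoc]
    rw [e, h1]; simp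
  have hB : ∀ n, c (n+2) * c (n+1) * c n * d n = 1 := by
    intro n
    have e0 : c 2 * c 1 * c 0 * d 0 = x^3*y^3*z := by
      simp only [hc_def, hd_def]
      simp [pow_succ, pow_zero, pow_three, mul_inv_rev, mul_assoc, inv_mul_cancel_left,
        mul_inv_cancel_left]
    have e : c (n+2) * c (n+1) * c n * d n = x^n * (c 2 * c 1 * c 0 * d 0) * (x^n)⁻¹ := by
      rw [hshift n 2, hshift n 1, show c n = c (n + 0) from by rw [Nat.add_zero],
        show d n = d (n + 0) from by rw [Nat.add_zero], hshift n 0, hdshift n 0]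
      group
    rw [e, e0, h2]; simp
  have hD : ∀ n, (d n)^7 = 1 := by
    intro n
    simp only [hd_def, conj_pow, hz]
    group
  -- the derived subgroup is commutative
  letI : CommGroup ↥(commutator Q) :=
    { (inferInstance : Group ↥(commutator Q)) with
      mul_comm := fun a b => Subtype.ext (hc a a.2 b b.2) }
  set A : ℕ → ↥(commutator Q) := fun n => ⟨c n, hcm n⟩ with hA_def
  set Z : ℕ → ↥(commutator Q) := fun n => ⟨d n, hdm n⟩ with hZ_def
  have hA' : ∀ n, A n * Z n ^ 3 = 1 := fun n => Subtype.ext (hA n)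
  have hB' : ∀ n, A (n+2) * A (n+1) * A n * Z n = 1 := fun n => Subtype.ext (hB n)
  have hD' : ∀ n, Z n ^ 7 = 1 := fun n => Subtype.ext (hD n)
  have hAper : ∀ n, A (7 + n) = A n := fun n => Subtype.ext (hcper n)
  -- pass to the additive group
  have ha1 : ∀ n, Additive.ofMul (A n) + 3•Additive.ofMul (Z n) = 0 := fun n => by
    simpa [ofMul_mul, ofMul_pow] using congrArg Additive.ofMul (hA' n)
  have hb1 : ∀ n, (Additive.ofMul (A (n+2)) + Additive.ofMul (A (n+1)) + Additive.ofMul (A n))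
      + Additive.ofMul (Z n) = 0 := fun n => by
    simpa [ofMul_mul, ofMul_pow] using congrArg Additive.ofMul (hB' n)
  have ht1 : ∀ n, (7:ℕ)•Additive.ofMul (Z n) = 0 := fun n => by
    simpa [ofMul_pow] using congrArg Additive.ofMul (hD' n)
  set β : ℕ → Additive ↥(commutator Q) :=
    fun n => Additive.ofMul (A (n+2)) + Additive.ofMul (A (n+1)) + Additive.ofMul (A n)
    with hβ_def
  have hζ : ∀ n, Additive.ofMul (Z n) = -β n := by
    intro n
    have h := hb1 n
    rw [hβ_def]
    rw [add_comm] at h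
    rwa [add_eq_zero_iff_eq_neg] at h
  have haβ : ∀ n, Additive.ofMul (A n) = 3•β n := by
    intro n
    have h := ha1 n
    rw [hζ n] at h
    rw [add_eq_zero_iff_eq_neg] at h
    simpa [smul_neg] using h
  have hβrel : ∀ n, 2•β n + 3•β (n+1) + 3•β (n+2) = 0 := by
    intro n
    have e : β n = 3•β (n+2) + 3•β (n+1) + 3•β n := by
      calc β n = Additive.ofMul (A (n+2)) + Additive.ofMul (A (n+1)) + Additive.ofMul (A n) :=
            congrFun hβ_def n
        _ = 3•β (n+2) + 3•β (n+1) + 3•β n := by rw [haβ (n+2), haβ (n+1), haβ n]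
    have e2 : 2•β n + 3•β (n+1) + 3•β (n+2) = (3•β (n+2) + 3•β (n+1) + 3•β n) - β n := by
      abel
    rw [e2, ← e]
    simp
  have hβ7 : ∀ n, (7:ℕ)•β n = 0 := by
    intro n
    have h := ht1 n
    rw [hζ n] at h
    simpa [smul_neg, neg_eq_zero] using h
  have hβper : ∀ n, β (7 + n) = β n := by
    intro n
    rw [hβ_def]; dsimp only
    rw [show 7 + n + 2 = 7 + (n + 2) from by omega, show 7 + n + 1 = 7 + (n + 1) from by omega,
      hAper, hAper, hAper]
  have h7 : β 7 = β 0 := hβper 0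
  have h8 : β 8 = β 1 := hβper 1
  have hβ0 : β 0 = 0 := by
    refine cert (β 0) (β 1) (β 2) (β 3) (β 4) (β 5) (β 6)
      (hβrel 0) (hβrel 1) (hβrel 2) (hβrel 4) ?_ ?_
      (hβ7 0) (hβ7 1) (hβ7 2) (hβ7 3) (hβ7 4) (hβ7 5) (hβ7 6)
    · have h := hβrel 5; rwa [h7] at h
    · have h := hβrel 6; rwa [h7, h8] at h
  have hA0 : A 0 = 1 := by
    have h := haβ 0
    rw [hβ0] at h
    simpa using h
  have hZ0 : Z 0 = 1 := by
    have h := hζ 0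
    rw [hβ0] at h
    simpa using h
  constructor
  · have h : c 0 = 1 := congrArg Subtype.val hA0
    simpa [hc_def] using h
  · have h : d 0 = 1 := congrArg Subtype.val hZ0
    simpa [hd_def] using h



/-- The relations of the presentation
`⟨s₀, s₁, s₂ ∣ s₀⁷, s₁⁷, s₂⁷, s₀ s₁ s₂³, s₀³ s₁³ s₂⟩`. -/
def gammaZeroRels : Set (FreeGroup (Fin 3)) :=
  {FreeGroup.of 0 ^ 7, FreeGroup.of 1 ^ 7, FreeGroup.of 2 ^ 7,
    FreeGroup.of 0 * FreeGroup.of 1 * FreeGroup.of 2 ^ 3,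
    FreeGroup.of 0 ^ 3 * FreeGroup.of 1 ^ 3 * FreeGroup.of 2}

local notation "Γ" => PresentedGroup gammaZeroRels

lemma rel_mk : ∀ r ∈ gammaZeroRels, PresentedGroup.mk gammaZeroRels r = 1 := by
  intro r hr
  exact (QuotientGroup.eq_one_iff r).mpr (Subgroup.subset_normalClosure hr)

lemma hR0 : (PresentedGroup.of 0 : Γ) ^ 7 = 1 := by
  have h := rel_mk (FreeGroup.of 0 ^ 7) (by simp [gammaZeroRels])
  rw [map_pow] at h
  exact h

lemma hR1 : (PresentedGroup.of 1 : Γ) ^ 7 = 1 := by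
  have h := rel_mk (FreeGroup.of 1 ^ 7) (by simp [gammaZeroRels])
  rw [map_pow] at h
  exact h

lemma hR2 : (PresentedGroup.of 2 : Γ) ^ 7 = 1 := by
  have h := rel_mk (FreeGroup.of 2 ^ 7) (by simp [gammaZeroRels])
  rw [map_pow] at h
  exact h

lemma hR3 : (PresentedGroup.of 0 : Γ) * PresentedGroup.of 1 * PresentedGroup.of 2 ^ 3 = 1 := by
  have h := rel_mk (FreeGroup.of 0 * FreeGroup.of 1 * FreeGroup.of 2 ^ 3) (by simp [gammaZeroRels])
  rw [map_mul, map_mul, map_pow] at h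
  exact h

lemma hR4 : (PresentedGroup.of 0 : Γ) ^ 3 * PresentedGroup.of 1 ^ 3 * PresentedGroup.of 2 = 1 := by
  have h := rel_mk (FreeGroup.of 0 ^ 3 * FreeGroup.of 1 ^ 3 * FreeGroup.of 2)
    (by simp [gammaZeroRels])
  rw [map_mul, map_mul, map_pow, map_pow] at h
  exact h

lemma abXY : Abelianization.of (PresentedGroup.of 0 : Γ) *
    Abelianization.of (PresentedGroup.of 1 : Γ) = 1 ∧
    Abelianization.of (PresentedGroup.of 2 : Γ) = 1 :=
  commAux _ _ _
    (by simp only [← map_pow]; rw [hR2, map_one])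
    (by simp only [← map_pow, ← map_mul]; rw [hR3, map_one])
    (by simp only [← map_pow, ← map_mul]; rw [hR4, map_one])

theorem gammaZero_abelianization_card :
    Nat.card (Abelianization Γ) = 7 := by
  classical
  set g : Abelianization Γ := Abelianization.of (PresentedGroup.of 0) with hg_def
  have hg7 : g ^ 7 = 1 := by rw [hg_def, ← map_pow, hR0, map_one]
  -- generation
  have hgen : ∀ q : Abelianization Γ, q ∈ Subgroup.zpowers g := by
    intro q
    refine QuotientGroup.induction_on q ?_
    intro a
    have ha : a ∈ Subgroup.closure (Set.range (PresentedGroup.of : Fin 3 → Γ)) := by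
      rw [PresentedGroup.closure_range_of]; trivial
    refine Subgroup.closure_induction
      (p := fun b _ => Abelianization.of b ∈ Subgroup.zpowers g) ?_ ?_ ?_ ?_ ha
    · rintro b ⟨i, rfl⟩
      fin_cases i
      · exact Subgroup.mem_zpowers g
      · show Abelianization.of (PresentedGroup.of 1 : Γ) ∈ Subgroup.zpowers g
        have h1 : Abelianization.of (PresentedGroup.of 1 : Γ) = g⁻¹ :=
          eq_inv_of_mul_eq_one_right abXY.1
        rw [h1]
        exact Subgroup.inv_mem _ (Subgroup.mem_zpowers g)
      · show Abelianization.of (PresentedGroup.of 2 : Γ) ∈ Subgroup.zpowers g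
        rw [abXY.2]
        exact Subgroup.one_mem _
    · show Abelianization.of (1 : Γ) ∈ Subgroup.zpowers g
      rw [map_one]; exact Subgroup.one_mem _
    · intro b c _ _ hb hc
      show Abelianization.of (b * c : Γ) ∈ Subgroup.zpowers g
      rw [map_mul]; exact Subgroup.mul_mem _ hb hc
    · intro b _ hb
      show Abelianization.of (b⁻¹ : Γ) ∈ Subgroup.zpowers g
      rw [map_inv]; exact Subgroup.inv_mem _ hb
  have htop : Subgroup.zpowers g = ⊤ := by
    rw [Subgroup.eq_top_iff']; exact hgen
  -- the map to ZMod 7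
  have hf : ∀ r ∈ gammaZeroRels,
      FreeGroup.lift (![Multiplicative.ofAdd 1, Multiplicative.ofAdd (-1), 1] :
        Fin 3 → Multiplicative (ZMod 7)) r = 1 := by
    intro r hr
    simp only [gammaZeroRels, Set.mem_insert_iff, Set.mem_singleton_iff] at hr
    rcases hr with rfl | rfl | rfl | rfl | rfl <;>
      · simp only [map_pow, map_mul, FreeGroup.lift_apply_of]
        decide
  set ρ : Abelianization Γ →* Multiplicative (ZMod 7) :=
    Abelianization.lift (PresentedGroup.toGroup hf) with hρ_def
  have hρg : ρ g = Multiplicative.ofAdd 1 := by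
    rw [hρ_def, hg_def]
    rw [Abelianization.lift_apply_of, PresentedGroup.toGroup.of]
    rfl
  have hord : orderOf g = 7 := by
    refine Nat.dvd_antisymm (orderOf_dvd_of_pow_eq_one hg7) ?_
    have hd : orderOf (ρ g) ∣ orderOf g := orderOf_map_dvd ρ g
    rw [hρg] at hd
    rwa [orderOf_ofAdd_eq_addOrderOf, ZMod.addOrderOf_one] at hd
  calc Nat.card (Abelianization Γ) = Nat.card (⊤ : Subgroup (Abelianization Γ)) :=
        (Subgroup.card_top).symm
    _ = Nat.card (Subgroup.zpowers g) := by rw [htop]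
    _ = orderOf g := Nat.card_zpowers g
    _ = 7 := hord

open commutatorElement

theorem gammaZero_derived_perfect :
    ⁅commutator Γ, commutator Γ⁆ = commutator Γ := by
  set K : Subgroup Γ := ⁅commutator Γ, commutator Γ⁆ with hK_def
  haveI hKnorm : K.Normal := Subgroup.commutator_normal _ _
  set π : Γ →* Γ ⧸ K := QuotientGroup.mk' K with hπ_def
  have hπsurj : Function.Surjective π := QuotientGroup.mk'_surjective K
  refine le_antisymm (Subgroup.commutator_mono le_top le_top) ?_
  -- the commutator subgroup of the quotient is abelian
  have hmap : commutator (Γ ⧸ K) = Subgroup.map π (commutator Γ) := by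
    rw [commutator_def, commutator_def, Subgroup.map_commutator,
      Subgroup.map_top_of_surjective π hπsurj]
  have hcomm : ∀ a ∈ commutator (Γ ⧸ K), ∀ b ∈ commutator (Γ ⧸ K), a * b = b * a := by
    intro a ha b hb
    rw [hmap] at ha hb
    obtain ⟨a', ha', rfl⟩ := ha
    obtain ⟨b', hb', rfl⟩ := hb
    have hk : ⁅a', b'⁆ ∈ K := Subgroup.commutator_mem_commutator ha' hb'
    have h1 : π ⁅a', b'⁆ = 1 := (QuotientGroup.eq_one_iff _).mpr hk
    rw [map_commutatorElement] at h1
    exact commutatorElement_eq_one_iff_mul_comm.mp h1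
  -- apply the core lemma
  obtain ⟨hxy1, hz1⟩ := coreLemma hcomm (π (PresentedGroup.of 0)) (π (PresentedGroup.of 1))
    (π (PresentedGroup.of 2))
    (by rw [← map_pow, hR0, map_one])
    (by rw [← map_pow, hR2, map_one])
    (by rw [← map_pow, ← map_mul, ← map_mul, hR3, map_one])
    (by simp only [← map_pow, ← map_mul]; rw [hR4, map_one])
  have hy_inv : π (PresentedGroup.of 1) = (π (PresentedGroup.of 0))⁻¹ :=
    eq_inv_of_mul_eq_one_right hxy1
  have hij : ∀ i j : Fin 3, Commute (π (PresentedGroup.of i)) (π (PresentedGroup.of j)) := by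
    intro i j
    fin_cases i <;> fin_cases j
    · exact Commute.refl _
    · show Commute (π (PresentedGroup.of 0)) (π (PresentedGroup.of 1))
      rw [hy_inv]; exact (Commute.refl _).inv_right
    · show Commute (π (PresentedGroup.of 0)) (π (PresentedGroup.of 2))
      rw [hz1]; exact Commute.one_right _
    · show Commute (π (PresentedGroup.of 1)) (π (PresentedGroup.of 0))
      rw [hy_inv]; exact (Commute.refl _).inv_left
    · exact Commute.refl _
    · show Commute (π (PresentedGroup.of 1)) (π (PresentedGroup.of 2))
      rw [hz1]; exact Commute.one_right _
    · show Commute (π (PresentedGroup.of 2)) (π (PresentedGroup.of 0))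
      rw [hz1]; exact Commute.one_left _
    · show Commute (π (PresentedGroup.of 2)) (π (PresentedGroup.of 1))
      rw [hz1]; exact Commute.one_left _
    · exact Commute.refl _
  -- the quotient is abelian
  have hgenQ : Subgroup.closure (Set.range (fun i => π (PresentedGroup.of i))) =
      (⊤ : Subgroup (Γ ⧸ K)) := by
    have : Set.range (fun i => π (PresentedGroup.of i)) =
        π '' Set.range (PresentedGroup.of : Fin 3 → Γ) := by
      rw [← Set.range_comp]; rfl
    rw [this, ← MonoidHom.map_closure, PresentedGroup.closure_range_of,
      ← MonoidHom.range_eq_map, MonoidHom.range_eq_top]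
    exact hπsurj
  have hab : ∀ a b : Γ ⧸ K, Commute a b := by
    intro a b
    have ha : a ∈ Subgroup.closure (Set.range (fun i => π (PresentedGroup.of i))) := by
      rw [hgenQ]; trivial
    have hb : b ∈ Subgroup.closure (Set.range (fun i => π (PresentedGroup.of i))) := by
      rw [hgenQ]; trivial
    refine Subgroup.closure_induction₂
      (p := fun s t _ _ => Commute s t) ?_ ?_ ?_ ?_ ?_ ?_ ?_ ha hb
    · rintro s t ⟨i, rfl⟩ ⟨j, rfl⟩
      exact hij i j
    · intro s _; exact Commute.one_left _
    · intro s _; exact Commute.one_right _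
    · intro s t w _ _ _ h1 h2; exact h1.mul_left h2
    · intro s t w _ _ _ h1 h2; exact h1.mul_right h2
    · intro s t _ _ h; exact h.inv_left
    · intro s t _ _ h; exact h.inv_right
  -- conclude
  rw [commutator_def, Subgroup.commutator_le]
  intro g1 _ g2 _
  have h1 : π ⁅g1, g2⁆ = 1 := by
    rw [map_commutatorElement]
    exact (hab (π g1) (π g2)).commutator_eq
  exact (QuotientGroup.eq_one_iff _).mp h1


/-- The abelianization of `Γ₀ = ⟨s₀, s₁, s₂ ∣ s₀⁷, s₁⁷, s₂⁷, s₀ s₁ s₂³, s₀³ s₁³ s₂⟩` has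
order `7`, and its derived subgroup is perfect. -/
theorem gammaZero_abelianization_card_and_derived_perfect :
    Nat.card (Abelianization (PresentedGroup gammaZeroRels)) = 7 ∧
    ⁅commutator (PresentedGroup gammaZeroRels), commutator (PresentedGroup gammaZeroRels)⁆ =
      commutator (PresentedGroup gammaZeroRels) := by
  exact ⟨gammaZero_abelianization_card, gammaZero_derived_perfect⟩
end

section
/- Let T be a tree (a connected acyclic simple graph) on a vertex set V, let v and w be adjacent vertices, let q ≥ 1, and let a₁, …, a_q be an injective enumeration of all neighbors of v other than w and b₁, …, b_q an injective enumeration of all neighbors of w other than v. Let g₁, …, g_q be graph automorphisms of T such that, for each i: g_i(v) = b_i and g_i(a_i) = w, and g_i preserves the bipartition of T (equivalently, the graph distance from x to g_i(x) is even for every vertex x). Let Γ be the subgroup of Aut(T) generated by g₁, …, g_q. Then: (1) the homomorphism from the free group on q generators to Aut(T) sending the i-th generator to g_i is injective, so Γ is free of rank q; (2) every non-identity element of Γ fixes no vertex of T; and (3) for every edge {x, y} of T there exists γ ∈ Γ such that the edge {γ(x), γ(y)} contains v or w. -/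
open SimpleGraph

section TreeLemmas

variable {V : Type} {G : SimpleGraph V}

private lemma tree_path_length (hT : G.IsTree) {x y : V} (p : G.Walk x y)
    (hp : p.IsPath) : p.length = G.dist x y := by
  obtain ⟨p', hp', hl⟩ := hT.isConnected.exists_path_of_dist x y
  rw [(hT.existsUnique_path x y).unique hp hp', hl]

private lemma tree_concat_path (hT : G.IsTree) {z x y : V} (p : G.Walk z x)
    (hp : p.IsPath) (h : G.Adj x y) (hy : y ∉ p.support) : (p.concat h).IsPath := by
  rw [SimpleGraph.Walk.isPath_def, SimpleGraph.Walk.support_concat,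
    List.nodup_append]
  exact ⟨hp.support_nodup, List.nodup_singleton y, by
    intro a ha b hb hab; simp at hb; subst hb; subst hab; exact hy ha⟩

private lemma tree_dist_dichotomy (hT : G.IsTree) {x y : V} (hxy : G.Adj x y) (z : V) :
    G.dist z y = G.dist z x + 1 ∨ G.dist z x = G.dist z y + 1 := by
  classical
  obtain ⟨p, hp, hl⟩ := hT.isConnected.exists_path_of_dist z y
  by_cases hx : x ∈ p.support
  · left
    have h1 := tree_path_length hT _ (hp.takeUntil hx)
    have h2 := tree_path_length hT _ (hp.dropUntil hx)
    have h3 : G.dist x y = 1 := SimpleGraph.dist_eq_one_iff_adj.2 hxy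
    have h4 := congrArg SimpleGraph.Walk.length (p.take_spec hx)
    rw [SimpleGraph.Walk.length_append] at h4
    omega
  · right
    have hc := tree_concat_path hT p hp hxy.symm hx
    have := tree_path_length hT _ hc
    rw [SimpleGraph.Walk.length_concat] at this
    omega

private lemma tree_gate_unique (hT : G.IsTree) {c u u' z : V}
    (h : G.Adj c u) (h' : G.Adj c u')
    (hd : G.dist z u + 1 = G.dist z c) (hd' : G.dist z u' + 1 = G.dist z c) : u = u' := by
  classical
  obtain ⟨p, hp, hl⟩ := hT.isConnected.exists_path_of_dist z u
  obtain ⟨p', hp', hl'⟩ := hT.isConnected.exists_path_of_dist z u'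
  have hv : c ∉ p.support := by
    intro hc
    have h1 := tree_path_length hT _ (hp.takeUntil hc)
    have h2 := p.length_takeUntil_le hc
    omega
  have hv' : c ∉ p'.support := by
    intro hc
    have h1 := tree_path_length hT _ (hp'.takeUntil hc)
    have h2 := p'.length_takeUntil_le hc
    omega
  have hc : (p.concat h.symm).IsPath := tree_concat_path hT p hp h.symm hv
  have hc' : (p'.concat h'.symm).IsPath := tree_concat_path hT p' hp' h'.symm hv'
  have heq := (hT.existsUnique_path z c).unique hc hc'
  obtain ⟨huu', -⟩ := SimpleGraph.Walk.concat_inj heq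
  exact huu'

private lemma tree_gate_exists (hT : G.IsTree) {z x : V} (hzx : z ≠ x) :
    ∃ u, G.Adj x u ∧ G.dist z u + 1 = G.dist z x := by
  obtain ⟨p, hp, hl⟩ := hT.isConnected.exists_path_of_dist x z
  cases p with
  | nil => exact absurd rfl hzx.symm
  | @cons _ u _ hadj p' =>
    refine ⟨u, hadj, ?_⟩
    have h1 : G.dist z u ≤ p'.length :=
      le_trans (le_of_eq SimpleGraph.dist_comm) (SimpleGraph.dist_le p')
    have h2 : G.dist z x ≤ G.dist z u + 1 := by
      have := hT.isConnected.dist_triangle (u := z) (v := u) (w := x)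
      have hud : G.dist u x = 1 := SimpleGraph.dist_eq_one_iff_adj.2 hadj.symm
      omega
    have h3 : G.dist x z = p'.length + 1 := by
      simpa using hl.symm
    have h4 : G.dist z x = G.dist x z := SimpleGraph.dist_comm
    omega

private lemma aut_dist_le (hconn : G.Connected) (f : V → V)
    (hf : ∀ x y, G.Adj x y → G.Adj (f x) (f y)) (x y : V) :
    G.dist (f x) (f y) ≤ G.dist x y := by
  obtain ⟨p, hp, hl⟩ := hconn.exists_path_of_dist x y
  calc G.dist (f x) (f y) ≤ (p.map ⟨f, fun h => hf _ _ h⟩).length := SimpleGraph.dist_le _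
    _ = G.dist x y := by rw [SimpleGraph.Walk.length_map, hl]

private lemma aut_dist_eq (hconn : G.Connected) (f : Equiv.Perm V)
    (hf : ∀ x y, G.Adj (f x) (f y) ↔ G.Adj x y) (x y : V) :
    G.dist (f x) (f y) = G.dist x y := by
  refine le_antisymm (aut_dist_le hconn f (fun x y h => (hf x y).2 h) x y) ?_
  have := aut_dist_le hconn f.symm (fun x y h => (hf _ _).1 (by simpa using h)) (f x) (f y)
  simpa using this

private lemma chain'_reduce {α : Type} [DecidableEq α] (L : List (α × Bool)) :
    (FreeGroup.reduce L).Chain' (fun x y => y ≠ (x.1, !x.2)) := by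
  induction L with
  | nil => exact List.isChain_nil
  | cons x L ih =>
    rcases h : FreeGroup.reduce L with - | ⟨hd, tl⟩ <;> rw [FreeGroup.reduce.cons, h]
    · exact List.isChain_singleton _
    · rw [h] at ih
      by_cases hc : x.1 = hd.1 ∧ x.2 = !hd.2
      · simp only [if_pos hc]
        exact ih.tail
      · simp only [if_neg hc]
        refine List.isChain_cons_cons.2 ⟨?_, ih⟩
        intro he
        exact hc ⟨by rw [he], by rw [he]; simp⟩

end TreeLemmas

private def ppAct {V : Type} {q : ℕ} (g : Fin q → Equiv.Perm V) (ℓ : Fin q × Bool) :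
    Equiv.Perm V :=
  cond ℓ.2 (g ℓ.1) (g ℓ.1)⁻¹

private def ppProd {V : Type} {q : ℕ} (g : Fin q → Equiv.Perm V)
    (L : List (Fin q × Bool)) : Equiv.Perm V :=
  (L.map fun x => cond x.2 (g x.1) (g x.1)⁻¹).prod

private def ppInv {q : ℕ} (ℓ : Fin q × Bool) : Fin q × Bool := (ℓ.1, !ℓ.2)

private def ppTgt {V : Type} {q : ℕ} (G : SimpleGraph V) (v w : V) (a b : Fin q → V)
    (ℓ : Fin q × Bool) (x : V) : Prop :=
  cond ℓ.2 (G.dist x w = G.dist x (b ℓ.1) + 1) (G.dist x v = G.dist x (a ℓ.1) + 1)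

private def ppGate {V : Type} (v w : V) (s : Bool) : V := cond s w v

private structure PPctx {V : Type} (G : SimpleGraph V) (q : ℕ) (v w : V)
    (a b : Fin q → V) (g : Fin q → Equiv.Perm V) : Prop where
  hT : G.IsTree
  hvw : G.Adj v w
  ha_inj : Function.Injective a
  hb_inj : Function.Injective b
  ha : ∀ x : V, (G.Adj v x ∧ x ≠ w) ↔ ∃ i, a i = x
  hb : ∀ x : V, (G.Adj w x ∧ x ≠ v) ↔ ∃ i, b i = x
  hg_aut : ∀ (i : Fin q) (x y : V), G.Adj (g i x) (g i y) ↔ G.Adj x y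
  hgv : ∀ i, g i v = b i
  hga : ∀ i, g i (a i) = w

section PingPong

variable {V : Type} {G : SimpleGraph V} {q : ℕ} {v w : V} {a b : Fin q → V}
  {g : Fin q → Equiv.Perm V}

namespace PPctx

variable (H : PPctx G q v w a b g)
include H

private lemma hav (i : Fin q) : G.Adj v (a i) := ((H.ha (a i)).2 ⟨i, rfl⟩).1
private lemma haw (i : Fin q) : a i ≠ w := ((H.ha (a i)).2 ⟨i, rfl⟩).2
private lemma hbw (i : Fin q) : G.Adj w (b i) := ((H.hb (b i)).2 ⟨i, rfl⟩).1
private lemma hbv (i : Fin q) : b i ≠ v := ((H.hb (b i)).2 ⟨i, rfl⟩).2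

private lemma distg (i : Fin q) (x y : V) : G.dist (g i x) (g i y) = G.dist x y :=
  aut_dist_eq H.hT.isConnected (g i) (H.hg_aut i) x y

private lemma hg_aut_inv (i : Fin q) (x y : V) :
    G.Adj ((g i)⁻¹ x) ((g i)⁻¹ y) ↔ G.Adj x y := by
  rw [← H.hg_aut i]
  simp

private lemma distginv (i : Fin q) (x y : V) :
    G.dist ((g i)⁻¹ x) ((g i)⁻¹ y) = G.dist x y :=
  aut_dist_eq H.hT.isConnected (g i)⁻¹ (H.hg_aut_inv i) x y

private lemma distact (ℓ : Fin q × Bool) (x y : V) :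
    G.dist (ppAct g ℓ x) (ppAct g ℓ y) = G.dist x y := by
  rcases ℓ with ⟨i, s⟩
  cases s
  · exact H.distginv i x y
  · exact H.distg i x y

/-- not in A i: distance to `a i` is one more than to `v`. -/
private lemma notA {i : Fin q} {x : V} (hx : ¬ G.dist x v = G.dist x (a i) + 1) :
    G.dist x (a i) = G.dist x v + 1 :=
  (tree_dist_dichotomy H.hT (H.hav i) x).resolve_right hx

private lemma notB {i : Fin q} {x : V} (hx : ¬ G.dist x w = G.dist x (b i) + 1) :
    G.dist x (b i) = G.dist x w + 1 :=
  (tree_dist_dichotomy H.hT (H.hbw i) x).resolve_right hx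

/-- membership in A i forces `w` to be further than `v`. -/
private lemma memA_w {i : Fin q} {x : V} (hx : G.dist x v = G.dist x (a i) + 1) :
    G.dist x w = G.dist x v + 1 := by
  rcases tree_dist_dichotomy H.hT H.hvw x with h | h
  · exact h
  · exact absurd (tree_gate_unique H.hT H.hvw (H.hav i) h.symm hx.symm) (H.haw i).symm

private lemma memB_v {i : Fin q} {x : V} (hx : G.dist x w = G.dist x (b i) + 1) :
    G.dist x v = G.dist x w + 1 := by
  rcases tree_dist_dichotomy H.hT H.hvw.symm x with h | h
  · exact h
  · exact absurd (tree_gate_unique H.hT H.hvw.symm (H.hbw i) h.symm hx.symm)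
      (H.hbv i).symm

private lemma gate_min {ℓ : Fin q × Bool} {x : V} (hx : ppTgt G v w a b ℓ x) (s : Bool) :
    G.dist x (ppGate v w ℓ.2) ≤ G.dist x (ppGate v w s) := by
  rcases ℓ with ⟨i, t⟩
  cases t <;> cases s <;> simp only [ppTgt, ppGate, cond] at hx ⊢
  · exact le_rfl
  · exact le_of_lt (by omega : G.dist x v < G.dist x v + 1) |>.trans
      (le_of_eq (H.memA_w hx).symm)
  · exact (H.memB_v hx).ge.trans' (by omega)
  · exact le_rfl

private lemma disj {ℓ m : Fin q × Bool} {x : V} (hx : ppTgt G v w a b ℓ x)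
    (hx' : ppTgt G v w a b m x) : ℓ = m := by
  rcases ℓ with ⟨i, s⟩; rcases m with ⟨j, t⟩
  cases s <;> cases t <;> simp only [ppTgt, cond] at hx hx'
  · have := tree_gate_unique H.hT (H.hav i) (H.hav j) hx.symm hx'.symm
    rw [H.ha_inj this]
  · have h1 := H.memA_w hx
    have h2 := H.memB_v hx'
    omega
  · have h1 := H.memA_w hx'
    have h2 := H.memB_v hx
    omega
  · have := tree_gate_unique H.hT (H.hbw i) (H.hbw j) hx.symm hx'.symm
    rw [H.hb_inj this]

private lemma step {ℓ : Fin q × Bool} {x : V} (hx : ¬ ppTgt G v w a b (ppInv ℓ) x) :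
    ppTgt G v w a b ℓ (ppAct g ℓ x) ∧
      G.dist (ppAct g ℓ x) (ppGate v w ℓ.2) = G.dist x (ppGate v w (!ℓ.2)) + 1 := by
  rcases ℓ with ⟨i, s⟩
  cases s <;> simp only [ppTgt, ppInv, ppGate, ppAct, cond, Bool.not_false,
      Bool.not_true] at hx ⊢
  · -- negative letter: x ∉ B i, g i ⁻¹ x ∈ A i
    have hxb : G.dist x (b i) = G.dist x w + 1 := H.notB hx
    have h1 : G.dist ((g i)⁻¹ x) v = G.dist x (b i) := by
      conv_lhs => rw [show v = (g i)⁻¹ (b i) by rw [← H.hgv i]; simp]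
      exact H.distginv i x (b i)
    have h2 : G.dist ((g i)⁻¹ x) (a i) = G.dist x w := by
      conv_lhs => rw [show a i = (g i)⁻¹ w by rw [← H.hga i]; simp]
      exact H.distginv i x w
    constructor <;> omega
  · -- positive letter: x ∉ A i, g i x ∈ B i
    have hxa : G.dist x (a i) = G.dist x v + 1 := H.notA hx
    have h1 : G.dist (g i x) w = G.dist x (a i) := by
      conv_lhs => rw [← H.hga i]
      exact H.distg i x (a i)
    have h2 : G.dist (g i x) (b i) = G.dist x v := by
      conv_lhs => rw [← H.hgv i]
      exact H.distg i x v
    constructor <;> omega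

end PPctx

end PingPong

private def ppR {q : ℕ} (ℓ m : Fin q × Bool) : Prop := m ≠ ppInv ℓ

section PingPong2

variable {V : Type} {G : SimpleGraph V} {q : ℕ} {v w : V} {a b : Fin q → V}
  {g : Fin q → Equiv.Perm V}

private lemma ppInv_invol (ℓ : Fin q × Bool) : ppInv (ppInv ℓ) = ℓ := by
  simp [ppInv]

private lemma ppProd_nil : ppProd g [] = 1 := rfl

private lemma ppProd_cons (ℓ : Fin q × Bool) (L : List (Fin q × Bool)) :
    ppProd g (ℓ :: L) = ppAct g ℓ * ppProd g L := by
  rw [ppProd, List.map_cons, List.prod_cons]; rfl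

private lemma ppProd_append (L M : List (Fin q × Bool)) :
    ppProd g (L ++ M) = ppProd g L * ppProd g M := by
  rw [ppProd, List.map_append, List.prod_append]; rfl

private lemma ppAct_ppInv (ℓ : Fin q × Bool) : ppAct g (ppInv ℓ) = (ppAct g ℓ)⁻¹ := by
  rcases ℓ with ⟨i, s⟩; cases s <;> simp [ppAct, ppInv]

private lemma ppProd_invrev (L : List (Fin q × Bool)) :
    ppProd g ((L.map ppInv).reverse) = (ppProd g L)⁻¹ := by
  induction L with
  | nil => rfl
  | cons ℓ L ih =>
    rw [List.map_cons, List.reverse_cons, ppProd_append, ih,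
      ppProd_cons (g := g) (ℓ := ℓ), ppProd_cons, ppProd_nil, mul_one, ppAct_ppInv,
      mul_inv_rev]

private lemma chain_inv {L : List (Fin q × Bool)} (h : L.Chain' ppR) :
    ((L.map ppInv).reverse).Chain' ppR := by
  unfold List.Chain' at h ⊢
  rw [List.isChain_reverse]
  refine List.isChain_map_of_isChain ppInv ?_ h
  intro x y hxy he
  rw [ppInv_invol] at he
  exact hxy he.symm

namespace PPctx

variable (H : PPctx G q v w a b g)
include H

private lemma keyA : ∀ (L : List (Fin q × Bool)) (hL : L ≠ []) (x : V),
    L.Chain' ppR → ¬ ppTgt G v w a b (ppInv (L.getLast hL)) x →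
    ppTgt G v w a b (L.head hL) (ppProd g L x) ∧
    G.dist x (ppGate v w (!(L.getLast hL).2)) + L.length ≤
      G.dist (ppProd g L x) (ppGate v w (L.head hL).2) := by
  intro L
  induction L with
  | nil => intro h; cases h rfl
  | cons ℓ L ih =>
    intro hL x hch hx
    cases L with
    | nil =>
      simp only [List.getLast_singleton, List.head_cons] at hx ⊢
      have hs := H.step (ℓ := ℓ) (x := x) hx
      rw [ppProd_cons, ppProd_nil, mul_one]
      refine ⟨hs.1, ?_⟩
      rw [List.length_singleton, hs.2]
    | cons m M =>
      have hch2 : (m :: M).Chain' ppR := hch.tail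
      have hR : ppR ℓ m := (List.isChain_cons_cons.1 hch).1
      have hlast : (ℓ :: m :: M).getLast hL = (m :: M).getLast (by simp) :=
        List.getLast_cons (by simp)
      rw [hlast] at hx
      have hy := ih (by simp) x hch2 hx
      set y := ppProd g (m :: M) x with hy_def
      have hnotsrc : ¬ ppTgt G v w a b (ppInv ℓ) y := by
        intro hsy
        exact hR (H.disj hy.1 hsy)
      have hs := H.step (ℓ := ℓ) (x := y) hnotsrc
      have hgm := H.gate_min hy.1 (!ℓ.2)
      have happ : ppProd g (ℓ :: m :: M) x = ppAct g ℓ y := by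
        rw [ppProd_cons, Equiv.Perm.mul_apply]
      rw [hlast, List.head_cons, happ]
      refine ⟨hs.1, ?_⟩
      have hlen : (ℓ :: m :: M).length = (m :: M).length + 1 := rfl
      simp only [List.head_cons] at hy hgm
      omega

private lemma keyB : ∀ (n : ℕ) (L : List (Fin q × Bool)) (hL : L ≠ []),
    L.length ≤ n → L.Chain' ppR → ∀ x : V, ppProd g L x ≠ x := by
  intro n
  induction n with
  | zero =>
    intro L hL hlen
    cases L with
    | nil => exact (hL rfl).elim
    | cons ℓ L => simp at hlen
  | succ n ih =>
    intro L hL hlen hch x heq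
    by_cases hcyc : L.getLast hL = ppInv (L.head hL)
    · -- conjugation case
      obtain ⟨ℓ, L', rfl⟩ : ∃ ℓ L', L = ℓ :: L' := by
        cases L with
        | nil => exact (hL rfl).elim
        | cons ℓ L' => exact ⟨ℓ, L', rfl⟩
      rw [List.head_cons] at hcyc
      have hL' : L' ≠ [] := by
        rintro rfl
        rw [List.getLast_singleton] at hcyc
        rcases ℓ with ⟨i, s⟩
        simp [ppInv] at hcyc
      have hlastc : (ℓ :: L').getLast hL = L'.getLast hL' := List.getLast_cons hL'
      set e := L'.getLast hL' with he_def
      have hdecomp : L' = L'.dropLast ++ [e] := (List.dropLast_append_getLast hL').symm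
      set M := L'.dropLast with hM_def
      have heinv : e = ppInv ℓ := by rw [← hlastc, hcyc]
      have hM : M ≠ [] := by
        rintro hM0
        have hL2 : L' = [ppInv ℓ] := by
          rw [hdecomp, hM0, heinv]; rfl
        rw [hL2] at hch
        exact (List.isChain_cons_cons.1 hch).1 rfl
      have hprod : ppProd g (ℓ :: L') = ppAct g ℓ * ppProd g M * (ppAct g ℓ)⁻¹ := by
        rw [ppProd_cons]
        conv_lhs => rw [hdecomp]
        rw [ppProd_append, heinv, ppProd_cons, ppProd_nil, mul_one, ppAct_ppInv,
          mul_assoc]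
      have h1 : ppAct g ℓ (ppProd g M ((ppAct g ℓ)⁻¹ x)) = x := by
        rw [hprod] at heq
        simpa only [Equiv.Perm.mul_apply] using heq
      have hfix : ppProd g M ((ppAct g ℓ)⁻¹ x) = (ppAct g ℓ)⁻¹ x := by
        calc ppProd g M ((ppAct g ℓ)⁻¹ x)
            = (ppAct g ℓ)⁻¹ (ppAct g ℓ (ppProd g M ((ppAct g ℓ)⁻¹ x))) := by simp
          _ = (ppAct g ℓ)⁻¹ x := by rw [h1]
      have hchM : M.Chain' ppR := by
        refine hch.infix ⟨[ℓ], [e], ?_⟩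
        simp only [List.cons_append, List.nil_append]
        rw [← hdecomp]
      have hlenM : M.length ≤ n := by
        have h2 : L'.length = M.length + 1 := by
          conv_lhs => rw [hdecomp]
          simp
        have h3 : (ℓ :: L').length = L'.length + 1 := rfl
        omega
      exact ih M hM hlenM hchM _ hfix
    · by_cases hx : ppTgt G v w a b (ppInv (L.getLast hL)) x
      · -- use the inverse word
        have hinv : ((L.map ppInv).reverse) ≠ [] := by simpa using hL
        have hchi := chain_inv hch
        have hheadi : ((L.map ppInv).reverse).head hinv = ppInv (L.getLast hL) := by
          rw [List.head_reverse, List.getLast_map]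
        have hlasti : ((L.map ppInv).reverse).getLast hinv = ppInv (L.head hL) := by
          rw [List.getLast_reverse, List.head_map]
        have hnot : ¬ ppTgt G v w a b
            (ppInv (((L.map ppInv).reverse).getLast hinv)) x := by
          rw [hlasti, ppInv_invol]
          intro h0
          exact hcyc (by rw [← H.disj hx h0, ppInv_invol])
        have hk := H.keyA _ hinv x hchi hnot
        rw [hheadi, hlasti] at hk
        have hfix' : ppProd g ((L.map ppInv).reverse) x = x := by
          rw [ppProd_invrev]
          conv_lhs => rw [← heq]
          simp
        rw [hfix'] at hk
        have hgm := H.gate_min hk.1 (!(ppInv (L.head hL)).2)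
        have hgm2 := H.gate_min hx (!(ppInv (L.getLast hL)).2)
        have hlen2 : 0 < L.length := List.length_pos_iff.2 hL
        have hlen3 : ((L.map ppInv).reverse).length = L.length := by simp
        rcases hL2 : L.getLast hL with ⟨j, t⟩
        rcases hL3 : L.head hL with ⟨j', t'⟩
        obtain ⟨hk1, hk2⟩ := hk
        simp only [ppInv, Bool.not_not] at hk2 hgm hgm2
        cases t <;> cases t' <;>
          simp only [Bool.not_true, Bool.not_false, ppGate, cond] at hk2 hgm hgm2 <;>
          omega
      · have hk := H.keyA L hL x hch hx
        rw [heq] at hk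
        have h1 := H.gate_min hk.1 (!(L.getLast hL).2)
        have h2 : 0 < L.length := List.length_pos_iff.2 hL
        omega

end PPctx
end PingPong2


/-- Ping-pong construction of free uniform lattices in trees: let `T` be a tree, `v, w`
adjacent vertices, `a₁, …, a_q` the neighbors of `v` other than `w` and `b₁, …, b_q` the
neighbors of `w` other than `v`.  If `g₁, …, g_q` are type-preserving automorphisms of `T`
with `gᵢ(v) = bᵢ` and `gᵢ(aᵢ) = w`, then the `gᵢ` generate a free group of rank `q` acting
freely on the vertices, and every edge can be translated by the group to an edge containing
`v` or `w`. -/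
theorem tree_pingPong_free_lattice
    (V : Type) (G : SimpleGraph V) (hT : G.IsTree) (v w : V) (hvw : G.Adj v w)
    (q : ℕ) (hq : 1 ≤ q)
    (a b : Fin q → V) (ha_inj : Function.Injective a) (hb_inj : Function.Injective b)
    (ha : ∀ x : V, (G.Adj v x ∧ x ≠ w) ↔ ∃ i, a i = x)
    (hb : ∀ x : V, (G.Adj w x ∧ x ≠ v) ↔ ∃ i, b i = x)
    (g : Fin q → Equiv.Perm V)
    (hg_aut : ∀ (i : Fin q) (x y : V), G.Adj (g i x) (g i y) ↔ G.Adj x y)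
    (hgv : ∀ i, g i v = b i) (hga : ∀ i, g i (a i) = w)
    (hg_even : ∀ (i : Fin q) (x : V), Even (G.dist x (g i x))) :
    Function.Injective (FreeGroup.lift g : FreeGroup (Fin q) →* Equiv.Perm V) ∧
    (∀ γ ∈ Subgroup.closure (Set.range g), γ ≠ 1 → ∀ x : V, γ x ≠ x) ∧
    (∀ x y : V, G.Adj x y → ∃ γ ∈ Subgroup.closure (Set.range g),
      γ x = v ∨ γ x = w ∨ γ y = v ∨ γ y = w) := by
  classical
  have H : PPctx G q v w a b g := ⟨hT, hvw, ha_inj, hb_inj, ha, hb, hg_aut, hgv, hga⟩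
  have hlift : ∀ ζ : FreeGroup (Fin q), (FreeGroup.lift g) ζ = ppProd g ζ.toWord := by
    intro ζ
    conv_lhs => rw [← FreeGroup.mk_toWord (x := ζ)]
    rw [FreeGroup.lift_mk]
    rfl
  have hchainW : ∀ ζ : FreeGroup (Fin q), ζ.toWord.Chain' ppR := by
    intro ζ
    rw [← FreeGroup.reduce_toWord]
    exact chain'_reduce _
  have hnofix : ∀ ζ : FreeGroup (Fin q), ζ ≠ 1 → ∀ x : V,
      (FreeGroup.lift g) ζ x ≠ x := by
    intro ζ hζ x
    rw [hlift]
    have hne : ζ.toWord ≠ [] := fun h0 => hζ (FreeGroup.toWord_eq_nil_iff.1 h0)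
    exact H.keyB ζ.toWord.length ζ.toWord hne le_rfl (hchainW ζ) x
  refine ⟨?_, ?_, ?_⟩
  · rw [injective_iff_map_eq_one]
    intro ζ hζ
    by_contra hne
    exact hnofix ζ hne v (by rw [hζ]; rfl)
  · intro γ hγ hγ1 x
    rw [← FreeGroup.range_lift_eq_closure] at hγ
    obtain ⟨ζ, rfl⟩ := hγ
    exact hnofix ζ (fun h0 => hγ1 (by rw [h0]; simp)) x
  · -- cocompactness on edges
    have hd1 : G.dist v w = 1 := SimpleGraph.dist_eq_one_iff_adj.2 hvw
    have hEB : ∀ (p c x y : V), G.Adj p c → G.Adj x y → y ≠ p →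
        G.dist x p = G.dist x c + 1 → G.dist y p = G.dist y c + 1 := by
      intro p c x y hpc hxy hyp hx
      by_contra hny
      have hyc : G.dist y c = G.dist y p + 1 :=
        (tree_dist_dichotomy hT hpc y).resolve_right hny
      have hcda : G.dist y x = 1 := SimpleGraph.dist_eq_one_iff_adj.2 hxy.symm
      have hcdb : G.dist x y = 1 := SimpleGraph.dist_eq_one_iff_adj.2 hxy
      have t1 : G.dist y c ≤ G.dist y x + G.dist x c := hT.isConnected.dist_triangle
      have t2 : G.dist x p ≤ G.dist x y + G.dist y p := hT.isConnected.dist_triangle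
      by_cases hxc : x = c
      · have h0 : G.dist x c = 0 := by rw [hxc, SimpleGraph.dist_self]
        have : G.dist y p = 0 := by omega
        exact hyp (hT.isConnected.dist_eq_zero_iff.1 this)
      · obtain ⟨z, hxz, hz⟩ := tree_gate_exists hT (fun h : c = x => hxc h.symm)
        -- hz : G.dist c z + 1 = G.dist c x
        have hpc1 : G.dist p c = 1 := SimpleGraph.dist_eq_one_iff_adj.2 hpc
        have u1 : G.dist p z ≤ G.dist p c + G.dist c z := hT.isConnected.dist_triangle
        have u2 : G.dist p x ≤ G.dist p z + G.dist z x := hT.isConnected.dist_triangle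
        have hzx1 : G.dist z x = 1 := SimpleGraph.dist_eq_one_iff_adj.2 hxz.symm
        have c1 : G.dist p x = G.dist x p := SimpleGraph.dist_comm
        have c2 : G.dist p z = G.dist z p := SimpleGraph.dist_comm
        have c3 : G.dist c x = G.dist x c := SimpleGraph.dist_comm
        have c4 : G.dist c z = G.dist z c := SimpleGraph.dist_comm
        have c5 : G.dist p y = G.dist y p := SimpleGraph.dist_comm
        have hzp : G.dist p z + 1 = G.dist p x := by omega
        have hyp2 : G.dist p y + 1 = G.dist p x := by omega
        have hyz : y = z := tree_gate_unique hT hxy hxz hyp2 hzp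
        rw [hyz] at hyc
        omega
    have hmapA : ∀ (i : Fin q) (x : V), G.dist x v = G.dist x (a i) + 1 →
        G.dist (g i x) w + 1 = G.dist x v ∧ G.dist (g i x) v ≤ G.dist x v := by
      intro i x hx
      have h1 : G.dist (g i x) w = G.dist x (a i) := by
        conv_lhs => rw [← hga i]
        exact H.distg i x (a i)
      have h2 : G.dist (g i x) v ≤ G.dist (g i x) w + G.dist w v :=
        hT.isConnected.dist_triangle
      have h3 : G.dist w v = 1 := SimpleGraph.dist_comm ▸ hd1
      omega
    have hmapB : ∀ (i : Fin q) (x : V), G.dist x w = G.dist x (b i) + 1 →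
        G.dist ((g i)⁻¹ x) v + 1 = G.dist x w ∧ G.dist ((g i)⁻¹ x) w ≤ G.dist x w := by
      intro i x hx
      have h1 : G.dist ((g i)⁻¹ x) v = G.dist x (b i) := by
        conv_lhs => rw [show v = (g i)⁻¹ (b i) by rw [← hgv i]; simp]
        exact H.distginv i x (b i)
      have h2 : G.dist ((g i)⁻¹ x) w ≤ G.dist ((g i)⁻¹ x) v + G.dist v w :=
        hT.isConnected.dist_triangle
      omega
    have hbranch : ∀ z : V, z ≠ v → z ≠ w →
        (∃ i, G.dist z v = G.dist z (a i) + 1) ∨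
        (∃ i, G.dist z w = G.dist z (b i) + 1) := by
      intro z hzv hzw
      rcases tree_dist_dichotomy hT hvw z with h | h
      · -- z is on the v side
        obtain ⟨u, hvu, hu⟩ := tree_gate_exists hT (fun h0 : z = v => hzv h0)
        have huw : u ≠ w := by
          rintro rfl
          omega
        obtain ⟨i, hi⟩ := (ha u).1 ⟨hvu, huw⟩
        exact Or.inl ⟨i, by rw [hi]; omega⟩
      · obtain ⟨u, hwu, hu⟩ := tree_gate_exists hT (fun h0 : z = w => hzw h0)
        have huv : u ≠ v := by
          rintro rfl
          omega
        obtain ⟨i, hi⟩ := (hb u).1 ⟨hwu, huv⟩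
        exact Or.inr ⟨i, by rw [hi]; omega⟩
    have main : ∀ (n : ℕ) (x y : V), G.Adj x y →
        G.dist x v + G.dist x w + G.dist y v + G.dist y w ≤ n →
        ∃ γ ∈ Subgroup.closure (Set.range g),
          γ x = v ∨ γ x = w ∨ γ y = v ∨ γ y = w := by
      intro n
      induction n with
      | zero =>
        intro x y hxy hm
        have : G.dist x v = 0 := by omega
        exact ⟨1, one_mem _, Or.inl (by
          simp only [Equiv.Perm.one_apply]
          exact hT.isConnected.dist_eq_zero_iff.1 this)⟩
      | succ n ih =>
        intro x y hxy hm
        by_cases hxv : x = v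
        · exact ⟨1, one_mem _, Or.inl (by simp [hxv])⟩
        by_cases hxw : x = w
        · exact ⟨1, one_mem _, Or.inr (Or.inl (by simp [hxw]))⟩
        by_cases hyv : y = v
        · exact ⟨1, one_mem _, Or.inr (Or.inr (Or.inl (by simp [hyv])))⟩
        by_cases hyw : y = w
        · exact ⟨1, one_mem _, Or.inr (Or.inr (Or.inr (by simp [hyw])))⟩
        rcases hbranch x hxv hxw with ⟨i, hxA⟩ | ⟨i, hxB⟩
        · have hyA : G.dist y v = G.dist y (a i) + 1 :=
            hEB v (a i) x y (H.hav i) hxy hyv hxA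
          have hxw2 : G.dist x w = G.dist x v + 1 := H.memA_w hxA
          have hyw2 : G.dist y w = G.dist y v + 1 := H.memA_w hyA
          have hx1 := hmapA i x hxA
          have hy1 := hmapA i y hyA
          obtain ⟨γ', hmem, hor⟩ := ih (g i x) (g i y) ((hg_aut i x y).2 hxy) (by omega)
          refine ⟨γ' * g i, mul_mem hmem (Subgroup.subset_closure ⟨i, rfl⟩), ?_⟩
          simpa only [Equiv.Perm.mul_apply] using hor
        · have hyB : G.dist y w = G.dist y (b i) + 1 :=
            hEB w (b i) x y (H.hbw i) hxy hyw hxB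
          have hxv2 : G.dist x v = G.dist x w + 1 := H.memB_v hxB
          have hyv2 : G.dist y v = G.dist y w + 1 := H.memB_v hyB
          have hx1 := hmapB i x hxB
          have hy1 := hmapB i y hyB
          obtain ⟨γ', hmem, hor⟩ := ih ((g i)⁻¹ x) ((g i)⁻¹ y)
            ((H.hg_aut_inv i x y).2 hxy) (by omega)
          refine ⟨γ' * (g i)⁻¹,
            mul_mem hmem (inv_mem (Subgroup.subset_closure ⟨i, rfl⟩)), ?_⟩
          simpa only [Equiv.Perm.mul_apply] using hor
    intro x y hxy
    exact main _ x y hxy le_rfl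
end

section
/- Let Γ be a finitely generated group such that every finite-index subgroup of Γ has finite abelianization. Assume that for every field K and every integer n ≥ 1, every group homomorphism Γ → GL_n(K) has virtually solvable image. Then for every commutative unital ring R and every integer n ≥ 1, every group homomorphism Γ → GL_n(R) has finite image. -/
/-- A group is virtually solvable if it contains a solvable subgroup of finite index. -/
def IsVirtuallySolvable (G : Type*) [Group G] : Prop :=
  ∃ H : Subgroup G, H.FiniteIndex ∧ IsSolvable H

open Subgroup Matrix commutatorElement

section Helpers

lemma finite_ab_of_surjective {A B : Type*} [Group A] [Group B]
    (φ : A →* B) (hφ : Function.Surjective φ) (h : Finite (Abelianization A)) :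
    Finite (Abelianization B) := by
  have hsurj : Function.Surjective (Abelianization.map φ) := by
    intro x
    refine QuotientGroup.induction_on x ?_
    intro b
    obtain ⟨a, rfl⟩ := hφ b
    exact ⟨Abelianization.of a, by simp; rfl⟩
  exact Finite.of_surjective _ hsurj

lemma finite_ab_of_mulEquiv {A B : Type*} [Group A] [Group B]
    (e : A ≃* B) (h : Finite (Abelianization A)) : Finite (Abelianization B) :=
  finite_ab_of_surjective e.toMonoidHom e.surjective h

lemma finiteIndex_ker_of_finite_range {G H : Type*} [Group G] [Group H] (φ : G →* H)
    (h : Finite ↥φ.range) : φ.ker.FiniteIndex := by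
  haveI : Finite (G ⧸ φ.ker) :=
    Finite.of_equiv _ (QuotientGroup.quotientKerEquivRange φ).symm.toEquiv
  exact Subgroup.finiteIndex_of_finite_quotient

lemma finite_range_of_finiteIndex_ker {G H : Type*} [Group G] [Group H] (φ : G →* H)
    (h : φ.ker.FiniteIndex) : Finite ↥φ.range := by
  haveI := h
  exact Finite.of_equiv _ (QuotientGroup.quotientKerEquivRange φ).toEquiv

lemma hab_subgroup {Γ : Type*} [Group Γ]
    (hab : ∀ H : Subgroup Γ, H.FiniteIndex → Finite (Abelianization H))
    (H : Subgroup Γ) (hH : H.FiniteIndex) :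
    ∀ K : Subgroup ↥H, K.FiniteIndex → Finite (Abelianization ↥K) := by
  intro K hK
  have hinj : Function.Injective H.subtype := H.subtype_injective
  have hLH : K.map H.subtype ≤ H := map_subtype_le K
  have h1 : (K.map H.subtype).subgroupOf H = K :=
    comap_map_eq_self_of_injective hinj K
  have hne : (K.map H.subtype).index ≠ 0 := by
    rw [← Subgroup.relIndex_mul_index hLH]
    have h2 : (K.map H.subtype).relIndex H = K.index := by
      rw [Subgroup.relIndex, h1]
    rw [h2]
    exact Nat.mul_ne_zero hK.index_ne_zero hH.index_ne_zero
  have hfin := hab (K.map H.subtype) ⟨hne⟩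
  exact finite_ab_of_mulEquiv (K.equivMapOfInjective H.subtype hinj).symm hfin

lemma finite_of_solvable_aux : ∀ (k : ℕ) (H : Type) [Group H],
    derivedSeries H k = ⊥ →
    (∀ K : Subgroup H, K.FiniteIndex → Finite (Abelianization ↥K)) → Finite H := by
  intro k
  induction k with
  | zero =>
    intro H _ hder _
    have : Subsingleton H := by
      rw [derivedSeries_zero] at hder
      constructor
      intro a b
      have ha : a ∈ (⊥ : Subgroup H) := hder ▸ Subgroup.mem_top a
      have hb : b ∈ (⊥ : Subgroup H) := hder ▸ Subgroup.mem_top b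
      rw [Subgroup.mem_bot] at ha hb
      rw [ha, hb]
    exact Finite.of_subsingleton
  | succ k ih =>
    intro H _ hder hyp
    have hfinab : Finite (Abelianization H) :=
      finite_ab_of_mulEquiv Subgroup.topEquiv (hyp ⊤ inferInstance)
    have hCq : Finite (H ⧸ commutator H) := hfinab
    have hCfi : (commutator H).FiniteIndex := Subgroup.finiteIndex_of_finite_quotient
    have hmap : ∀ j, (derivedSeries ↥(commutator H) j).map (commutator H).subtype
        ≤ derivedSeries H (j + 1) := by
      intro j
      induction j with
      | zero =>
        rw [derivedSeries_zero, ← MonoidHom.range_eq_map, Subgroup.range_subtype,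
          derivedSeries_succ, derivedSeries_zero]
        exact le_of_eq (commutator_def H ▸ rfl)
      | succ j ihj =>
        rw [derivedSeries_succ, derivedSeries_succ, Subgroup.map_commutator]
        exact Subgroup.commutator_mono ihj ihj
    have hCder : derivedSeries ↥(commutator H) k = ⊥ := by
      have h2 := hmap k
      rw [hder] at h2
      have h3 := le_bot_iff.mp h2
      rw [Subgroup.map_eq_bot_iff_of_injective _ (commutator H).subtype_injective] at h3
      exact h3
    have hCfin : Finite ↥(commutator H) :=
      ih ↥(commutator H) hCder (hab_subgroup hyp (commutator H) hCfi)
    exact Finite.of_equiv _ (Subgroup.groupEquivQuotientProdSubgroup (s := commutator H)).symm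

lemma finite_of_solvable (H : Type) [Group H] [hs : Group.IsSolvable H]
    (hyp : ∀ K : Subgroup H, K.FiniteIndex → Finite (Abelianization ↥K)) : Finite H := by
  obtain ⟨k, hk⟩ := hs.solvable
  exact finite_of_solvable_aux k H hk hyp

lemma finite_range_of_virtuallySolvable {Γ : Type} {G : Type} [Group Γ] [Group G] [Group.FG Γ]
    (hab : ∀ H : Subgroup Γ, H.FiniteIndex → Finite (Abelianization H))
    (g : Γ →* G) (hvs : IsVirtuallySolvable ↥g.range) : Finite ↥g.range := by
  obtain ⟨H, hHfi, hHsol⟩ := hvs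
  set H' : Subgroup G := H.map g.range.subtype with hH'
  set Γ' : Subgroup Γ := H'.comap g with hΓ'
  have hmem : ∀ γ : ↥Γ', g ↑γ ∈ H' := fun γ => γ.2
  let g' : ↥Γ' →* ↥H' := (g.comp Γ'.subtype).codRestrict H' hmem
  have hg'surj : Function.Surjective g' := by
    rintro ⟨x, hx⟩
    have hxr : x ∈ g.range := map_subtype_le H hx
    obtain ⟨γ, hγ⟩ := hxr
    exact ⟨⟨γ, show g γ ∈ H' from hγ ▸ hx⟩, Subtype.ext hγ⟩
  have hsub : H'.subgroupOf g.range = H :=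
    comap_map_eq_self_of_injective g.range.subtype_injective H
  have hΓ'fi : Γ'.FiniteIndex := by
    constructor
    rw [hΓ', Subgroup.index_comap, Subgroup.relIndex, hsub]
    exact hHfi.index_ne_zero
  haveI := hΓ'fi
  -- hypothesis for subgroups of H'
  have hyp' : ∀ K : Subgroup ↥H', K.FiniteIndex → Finite (Abelianization ↥K) := by
    intro K hK
    have hKc : (K.comap g').FiniteIndex := by
      constructor
      rw [Subgroup.index_comap, g'.range_eq_top_of_surjective hg'surj, Subgroup.relIndex_top_right]
      exact hK.index_ne_zero
    have hfin := hab_subgroup hab Γ' hΓ'fi (K.comap g') hKc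
    have hmem2 : ∀ x : ↥(K.comap g'), g' ↑x ∈ K := fun x => x.2
    let g'' : ↥(K.comap g') →* ↥K := (g'.comp (K.comap g').subtype).codRestrict K hmem2
    have hsur : Function.Surjective g'' := by
      rintro ⟨x, hx⟩
      obtain ⟨y, hy⟩ := hg'surj x
      exact ⟨⟨y, show g' y ∈ K from hy ▸ hx⟩, Subtype.ext hy⟩
    exact finite_ab_of_surjective g'' hsur hfin
  -- H' solvable and finite
  let e : ↥H ≃* ↥H' := H.equivMapOfInjective g.range.subtype g.range.subtype_injective
  haveI : Group.IsSolvable ↥H := hHsol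
  haveI hsolv' : Group.IsSolvable ↥H' := solvable_of_surjective (f := e.toMonoidHom) e.surjective
  have hH'fin : Finite ↥H' := finite_of_solvable ↥H' hyp'
  have hHfin : Finite ↥H := Finite.of_equiv _ e.symm.toEquiv
  haveI := hHfi
  exact Finite.of_equiv _ (Subgroup.groupEquivQuotientProdSubgroup (s := H)).symm

variable {A : Type*} [CommRing A] {n : ℕ}

/-- matrices with all entries in an ideal -/
def MatMem (I : Ideal A) (M : Matrix (Fin n) (Fin n) A) : Prop := ∀ i j, M i j ∈ I

lemma MatMem.add {I : Ideal A} {M N : Matrix (Fin n) (Fin n) A}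
    (hM : MatMem I M) (hN : MatMem I N) : MatMem I (M + N) :=
  fun i j => by simpa using I.add_mem (hM i j) (hN i j)

lemma MatMem.mul_right {I : Ideal A} {M : Matrix (Fin n) (Fin n) A}
    (hM : MatMem I M) (N : Matrix (Fin n) (Fin n) A) : MatMem I (M * N) := by
  intro i j
  rw [Matrix.mul_apply]
  exact Ideal.sum_mem I fun k _ => I.mul_mem_right _ (hM i k)

lemma MatMem.mul_left {I : Ideal A} {M : Matrix (Fin n) (Fin n) A}
    (hM : MatMem I M) (N : Matrix (Fin n) (Fin n) A) : MatMem I (N * M) := by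
  intro i j
  rw [Matrix.mul_apply]
  exact Ideal.sum_mem I fun k _ => I.mul_mem_left _ (hM k j)

lemma MatMem.neg {I : Ideal A} {M : Matrix (Fin n) (Fin n) A} (hM : MatMem I M) :
    MatMem I (-M) := fun i j => by simpa using I.neg_mem (hM i j)

lemma MatMem.mul_mem_mul {I J : Ideal A} {M N : Matrix (Fin n) (Fin n) A}
    (hM : MatMem I M) (hN : MatMem J N) : MatMem (I * J) (M * N) := by
  intro i j
  rw [Matrix.mul_apply]
  exact Ideal.sum_mem _ fun k _ => Ideal.mul_mem_mul (hM i k) (hN k j)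

/-- the congruence subgroup of GL_n at an ideal I -/
def congSubgroup (I : Ideal A) : Subgroup (GL (Fin n) A) where
  carrier := {u | MatMem I ((u : Matrix (Fin n) (Fin n) A) - 1)}
  one_mem' := by
    intro i j
    simp
  mul_mem' := by
    intro u v hu hv
    have key : ((u * v : GL (Fin n) A) : Matrix (Fin n) (Fin n) A) - 1
        = ((u : Matrix (Fin n) (Fin n) A) - 1) * (v : Matrix (Fin n) (Fin n) A)
          + ((v : Matrix (Fin n) (Fin n) A) - 1) := by
      simp [Units.val_mul]
      noncomm_ring
    show MatMem I _
    rw [key]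
    exact (MatMem.mul_right hu _).add hv
  inv_mem' := by
    intro u hu
    have key : ((u⁻¹ : GL (Fin n) A) : Matrix (Fin n) (Fin n) A) - 1
        = ((u⁻¹ : GL (Fin n) A) : Matrix (Fin n) (Fin n) A) *
          (-((u : Matrix (Fin n) (Fin n) A) - 1)) := by
      have h1 : ((u⁻¹ : GL (Fin n) A) : Matrix (Fin n) (Fin n) A) *
          (u : Matrix (Fin n) (Fin n) A) = 1 := u.inv_mul
      rw [mul_neg, mul_sub, h1, mul_one]
      noncomm_ring
    show MatMem I _
    rw [key]
    exact MatMem.mul_left hu.neg _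

lemma congSubgroup_mono {I J : Ideal A} (h : I ≤ J) :
    (congSubgroup (n := n) I) ≤ congSubgroup J :=
  fun u hu i j => h (hu i j)

lemma commutator_mem_cong {I J : Ideal A} {u v : GL (Fin n) A}
    (hu : u ∈ congSubgroup I) (hv : v ∈ congSubgroup J) :
    ⁅u, v⁆ ∈ congSubgroup (I * J) := by
  have hval : Units.val ⁅u, v⁆ = Units.val (u * v) * Units.val ((v * u)⁻¹) := by
    rw [← Units.val_mul]
    congr 1
    rw [commutatorElement_def]
    group
  have hdiff : Units.val ⁅u, v⁆ - 1
      = (Units.val (u * v) - Units.val (v * u)) * Units.val ((v * u)⁻¹) := by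
    rw [hval, sub_mul]
    congr 1
    rw [← Units.val_mul, mul_inv_cancel, Units.val_one]
  show MatMem _ _
  rw [hdiff]
  have h2 : Units.val (u * v) - Units.val (v * u)
      = (Units.val u - 1) * (Units.val v - 1) - (Units.val v - 1) * (Units.val u - 1) := by
    rw [Units.val_mul, Units.val_mul]
    noncomm_ring
  have h3 : MatMem (I * J) (Units.val (u * v) - Units.val (v * u)) := by
    rw [h2, sub_eq_add_neg]
    refine MatMem.add (MatMem.mul_mem_mul hu hv) ?_
    have := (MatMem.mul_mem_mul hv hu).neg
    rwa [mul_comm J I] at this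
  exact h3.mul_right _

lemma solvable_sandwich {G : Type*} [Group G] {H K : Subgroup G} (hKH : K ≤ H)
    (hcomm : ∀ x ∈ H, ∀ y ∈ H, ⁅x, y⁆ ∈ K) (hK : Group.IsSolvable ↥K) : Group.IsSolvable ↥H := by
  let K' : Subgroup ↥H := K.subgroupOf H
  haveI hK'norm : K'.Normal := by
    constructor
    intro k hk h
    rw [Subgroup.mem_subgroupOf] at hk ⊢
    have : ((h * k * h⁻¹ : ↥H) : G) = ⁅(h : G), (k : G)⁆ * (k : G) := by
      push_cast
      group
    rw [this]
    exact K.mul_mem (hcomm _ h.2 _ (hKH hk)) hk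
  haveI : Group.IsSolvable ↥K' := by
    haveI := hK
    let e : ↥K ≃* ↥K' := (Subgroup.subgroupOfEquivOfLe hKH).symm
    exact solvable_of_surjective (f := e.toMonoidHom) e.surjective
  haveI : Group.IsSolvable (↥H ⧸ K') := by
    apply isSolvable_of_comm
    intro a b
    induction a using QuotientGroup.induction_on
    induction b using QuotientGroup.induction_on
    rename_i x y
    rw [← QuotientGroup.mk_mul, ← QuotientGroup.mk_mul, QuotientGroup.eq]
    rw [Subgroup.mem_subgroupOf]
    have : (((x * y)⁻¹ * (y * x) : ↥H) : G) = ⁅((y : G))⁻¹, ((x : G))⁻¹⁆ := by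
      push_cast
      group
    rw [this]
    exact hcomm _ (H.inv_mem y.2) _ (H.inv_mem x.2)
  exact solvable_of_ker_le_range K'.subtype (QuotientGroup.mk' K')
    (by rw [QuotientGroup.ker_mk', Subgroup.range_subtype])

lemma solvable_cong : ∀ (m : ℕ) (I : Ideal A), I ^ (m + 1) = ⊥ →
    Group.IsSolvable ↥(congSubgroup (n := n) I) := by
  intro m
  induction m with
  | zero =>
    intro I hI
    rw [pow_one] at hI
    subst hI
    apply isSolvable_of_comm
    intro a b
    have key : ∀ c : ↥(congSubgroup (n := n) (⊥ : Ideal A)), c = 1 := by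
      rintro ⟨c, hc⟩
      have hz : Units.val c - 1 = 0 := by
        ext i j
        simpa using hc i j
      have hc1 : Units.val c = Units.val 1 := by
        rw [Units.val_one]
        linear_combination (norm := noncomm_ring) hz
      exact Subtype.ext (Units.ext hc1)
    rw [key a, key b]
  | succ m ih =>
    intro I hI
    have h2 : (I * I) ^ (m + 1) = ⊥ := by
      have hle : (I * I) ^ (m + 1) ≤ I ^ (m + 2) := by
        rw [← pow_two, ← pow_mul]
        exact Ideal.pow_le_pow_right (by omega)
      rw [hI] at hle
      exact le_bot_iff.mp hle
    have hKsolv := ih (I * I) h2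
    refine solvable_sandwich (K := congSubgroup (I * I)) ?_ ?_ hKsolv
    · exact congSubgroup_mono Ideal.mul_le_right
    · intro x hx y hy
      exact commutator_mem_cong hx hy

lemma mem_congSubgroup {A : Type*} [CommRing A] {n : ℕ} (I : Ideal A) (u : GL (Fin n) A) :
    u ∈ congSubgroup I ↔ MatMem I (Units.val u - 1) := Iff.rfl

lemma finite_range_GL {Γ : Type} [Group Γ] [Group.FG Γ]
    (hab : ∀ H : Subgroup Γ, H.FiniteIndex → Finite (Abelianization H))
    {A : Type} [CommRing A] [IsNoetherianRing A] {n : ℕ}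
    (hfield' : ∀ (K : Type) (_ : Field K) (h : Γ →* GL (Fin n) K), IsVirtuallySolvable ↥h.range)
    (g : Γ →* GL (Fin n) A) : Finite ↥g.range := by
  classical
  have hPfin : (minimalPrimes A).Finite := minimalPrimes.finite_of_isNoetherianRing A
  haveI := hPfin.to_subtype
  have key : ∀ p : ↥(minimalPrimes A), ∃ Kp : Subgroup Γ, Kp.FiniteIndex ∧
      ∀ γ ∈ Kp, MatMem p.1 (Units.val (g γ) - 1) := by
    rintro ⟨p, hp⟩
    haveI hprime : p.IsPrime := hp.1.1
    set K := FractionRing (A ⧸ p) with hK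
    set σ : A →+* K := (algebraMap (A ⧸ p) K).comp (Ideal.Quotient.mk p) with hσ
    have hker : ∀ a : A, σ a = 0 → a ∈ p := by
      intro a h
      have h2 : algebraMap (A ⧸ p) K (Ideal.Quotient.mk p a) = 0 := h
      have h3 := (map_eq_zero_iff _ (IsFractionRing.injective (A ⧸ p) K)).mp h2
      rwa [Ideal.Quotient.eq_zero_iff_mem] at h3
    set h : Γ →* GL (Fin n) K := (Matrix.GeneralLinearGroup.map σ).comp g with hh
    have hfin : Finite ↥h.range :=
      finite_range_of_virtuallySolvable hab h (hfield' K inferInstance h)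
    refine ⟨h.ker, finiteIndex_ker_of_finite_range h hfin, ?_⟩
    intro γ hγ i j
    have h1 : Matrix.GeneralLinearGroup.map σ (g γ) = 1 := hγ
    have h2 : (Units.val (g γ)).map σ = (1 : Matrix (Fin n) (Fin n) K) := by
      have := congrArg Units.val h1
      simpa [Matrix.GeneralLinearGroup.map, RingHom.mapMatrix_apply] using this
    apply hker
    have h3 : σ ((Units.val (g γ)) i j) = (1 : Matrix (Fin n) (Fin n) K) i j := by
      rw [← h2, Matrix.map_apply]
    have h4 : σ ((1 : Matrix (Fin n) (Fin n) A) i j) = (1 : Matrix (Fin n) (Fin n) K) i j := by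
      by_cases hij : i = j <;> simp [Matrix.one_apply, hij]
    rw [Matrix.sub_apply, map_sub, h3, h4, sub_self]
  choose Kp hKfi hKmem using key
  set Γ₁ : Subgroup Γ := ⨅ p, Kp p with hΓ₁
  haveI hΓ₁fi : Γ₁.FiniteIndex := Subgroup.finiteIndex_iInf hKfi
  have hN : ∀ γ ∈ Γ₁, g γ ∈ congSubgroup (nilradical A) := by
    intro γ hγ
    rw [mem_congSubgroup]
    intro i j
    rw [nilradical_eq_sInf]
    apply Submodule.mem_sInf.mpr
    intro q hq
    haveI : Ideal.IsPrime q := hq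
    obtain ⟨p, hpmem, hple⟩ := Ideal.exists_minimalPrimes_le (I := (⊥ : Ideal A)) (J := q) bot_le
    have hpmem' : p ∈ minimalPrimes A := hpmem
    exact hple (hKmem ⟨p, hpmem'⟩ γ (Subgroup.mem_iInf.mp hγ ⟨p, hpmem'⟩) i j)
  obtain ⟨m, hm⟩ := IsNoetherianRing.isNilpotent_nilradical A
  have hm1 : nilradical A ^ (m + 1) = ⊥ := by rw [pow_succ, hm]; simp
  have hsolK : Group.IsSolvable ↥(congSubgroup (n := n) (nilradical A)) := solvable_cong m _ hm1
  set g₁ := g.comp Γ₁.subtype with hg₁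
  have hrange : g₁.range ≤ congSubgroup (nilradical A) := by
    rintro x ⟨γ, rfl⟩
    exact hN γ γ.2
  have hsolvrange : Group.IsSolvable ↥g₁.range := by
    haveI := hsolK
    let e := Subgroup.subgroupOfEquivOfLe hrange
    exact solvable_of_surjective (f := e.toMonoidHom) e.surjective
  haveI : Group.FG ↥Γ₁ := Subgroup.fg_of_index_ne_zero Γ₁
  have hfin₁ : Finite ↥g₁.range := by
    haveI := hsolvrange
    exact finite_range_of_virtuallySolvable (hab_subgroup hab Γ₁ hΓ₁fi) g₁
      ⟨⊤, inferInstance, (inferInstance : Group.IsSolvable _)⟩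
  have hker₁ := finiteIndex_ker_of_finite_range g₁ hfin₁
  have hkk : g₁.ker = g.ker.subgroupOf Γ₁ := rfl
  have h5 : (g.ker ⊓ Γ₁).index ≠ 0 := by
    rw [← Subgroup.relIndex_mul_index (inf_le_right : g.ker ⊓ Γ₁ ≤ Γ₁),
      Subgroup.inf_relIndex_right]
    have : g.ker.relIndex Γ₁ ≠ 0 := by
      rw [Subgroup.relIndex, ← hkk]
      exact hker₁.index_ne_zero
    exact Nat.mul_ne_zero this hΓ₁fi.index_ne_zero
  have h6 : g.ker.index ≠ 0 := by
    intro h0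
    exact h5 (Nat.eq_zero_of_zero_dvd (h0 ▸ Subgroup.index_dvd_of_le inf_le_left))
  exact finite_range_of_finiteIndex_ker g ⟨h6⟩

variable {R : Type} [CommRing R] {n : ℕ}

/-- units whose entries and inverse entries lie in a subring -/
def entriesSubgroup (S : Subring R) : Subgroup (GL (Fin n) R) where
  carrier := {u | (∀ i j, Units.val u i j ∈ S) ∧ (∀ i j, Units.val u⁻¹ i j ∈ S)}
  one_mem' := by
    constructor <;>
      · intro i j
        by_cases h : i = j <;> simp [Matrix.one_apply, h, S.one_mem, S.zero_mem]
  mul_mem' := by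
    rintro u v ⟨hu1, hu2⟩ ⟨hv1, hv2⟩
    constructor
    · intro i j
      rw [Units.val_mul, Matrix.mul_apply]
      exact S.sum_mem fun k _ => S.mul_mem (hu1 i k) (hv1 k j)
    · intro i j
      rw [_root_.mul_inv_rev, Units.val_mul, Matrix.mul_apply]
      exact S.sum_mem fun k _ => S.mul_mem (hv2 i k) (hu2 k j)
  inv_mem' := by
    rintro u ⟨hu1, hu2⟩
    refine ⟨hu2, ?_⟩
    simpa [inv_inv] using hu1

theorem finite_image_in_ringLinear_aux
    (Γ : Type) [Group Γ] [Group.FG Γ]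
    (hab : ∀ H : Subgroup Γ, H.FiniteIndex → Finite (Abelianization H))
    (hfield : ∀ (K : Type) (_ : Field K),
      ∀ f : Γ →* Matrix.GeneralLinearGroup (Fin n) K, IsVirtuallySolvable ↥f.range)
    (f : Γ →* Matrix.GeneralLinearGroup (Fin n) R) :
    Finite ↥f.range := by
  classical
  obtain ⟨T, hT⟩ := (Group.FG.out : (⊤ : Subgroup Γ).FG)
  set E : Set R := ⋃ γ ∈ (T : Set Γ),
    (Set.range fun p : Fin n × Fin n => Units.val (f γ) p.1 p.2) ∪
    (Set.range fun p : Fin n × Fin n => Units.val (f γ)⁻¹ p.1 p.2) with hE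
  have hEfin : E.Finite :=
    Set.Finite.biUnion T.finite_toSet fun γ _ => (Set.finite_range _).union (Set.finite_range _)
  set S : Subring R := Subring.closure E with hS
  haveI : IsNoetherianRing ↥S := is_noetherian_subring_closure E hEfin
  -- all images lie in entriesSubgroup S
  have hf : ∀ γ, f γ ∈ entriesSubgroup S := by
    have hle : (⊤ : Subgroup Γ) ≤ (entriesSubgroup S).comap f := by
      rw [← hT]
      apply (Subgroup.closure_le _).mpr
      intro t ht
      have hmem : ∀ x ∈ (Set.range fun p : Fin n × Fin n => Units.val (f t) p.1 p.2) ∪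
          (Set.range fun p : Fin n × Fin n => Units.val (f t)⁻¹ p.1 p.2), x ∈ S :=
        fun x hx => Subring.subset_closure (Set.mem_biUnion ht hx)
      constructor
      · intro i j
        exact hmem _ (Or.inl ⟨(i, j), rfl⟩)
      · intro i j
        exact hmem _ (Or.inr ⟨(i, j), rfl⟩)
    intro γ
    exact hle (Subgroup.mem_top γ)
  -- the matrix entry inclusion ring hom
  set φ : Matrix (Fin n) (Fin n) ↥S →+* Matrix (Fin n) (Fin n) R := S.subtype.mapMatrix with hφ
  have hφinj : Function.Injective φ := by
    intro M N h
    ext i j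
    have h2 := congrArg (fun X : Matrix (Fin n) (Fin n) R => X i j) h
    exact h2
  set Φ : GL (Fin n) ↥S →* GL (Fin n) R := Units.map φ.toMonoidHom with hΦ
  have hΦinj : Function.Injective Φ := Units.map_injective hφinj
  -- lift units
  have lift : ∀ γ : Γ, { v : GL (Fin n) ↥S // Φ v = f γ } := by
    intro γ
    refine ⟨⟨Matrix.of fun i j => (⟨Units.val (f γ) i j, (hf γ).1 i j⟩ : ↥S),
      Matrix.of fun i j => (⟨Units.val (f γ)⁻¹ i j, (hf γ).2 i j⟩ : ↥S), ?_, ?_⟩, ?_⟩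
    · apply hφinj
      rw [_root_.map_mul, _root_.map_one]
      have e1 : φ (Matrix.of fun i j => (⟨Units.val (f γ) i j, (hf γ).1 i j⟩ : ↥S))
          = Units.val (f γ) := by ext i j; rfl
      have e2 : φ (Matrix.of fun i j => (⟨Units.val (f γ)⁻¹ i j, (hf γ).2 i j⟩ : ↥S))
          = Units.val (f γ)⁻¹ := by ext i j; rfl
      rw [e1, e2, ← Units.val_mul, mul_inv_cancel, Units.val_one]
    · apply hφinj
      rw [_root_.map_mul, _root_.map_one]
      have e1 : φ (Matrix.of fun i j => (⟨Units.val (f γ) i j, (hf γ).1 i j⟩ : ↥S))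
          = Units.val (f γ) := by ext i j; rfl
      have e2 : φ (Matrix.of fun i j => (⟨Units.val (f γ)⁻¹ i j, (hf γ).2 i j⟩ : ↥S))
          = Units.val (f γ)⁻¹ := by ext i j; rfl
      rw [e1, e2, ← Units.val_mul, inv_mul_cancel, Units.val_one]
    · apply Units.ext
      show φ _ = _
      ext i j
      rfl
  set g : Γ →* GL (Fin n) ↥S := MonoidHom.mk' (fun γ => (lift γ).1) (by
    intro a b
    apply hΦinj
    rw [_root_.map_mul Φ, (lift a).2, (lift b).2, (lift (a * b)).2]
    exact _root_.map_mul f a b) with hg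
  have hcomm : ∀ γ, Φ (g γ) = f γ := fun γ => (lift γ).2
  have hker : g.ker = f.ker := by
    ext γ
    constructor
    · intro h
      have : Φ (g γ) = 1 := by rw [(show g γ = 1 from h), _root_.map_one]
      rw [hcomm γ] at this
      exact this
    · intro h
      apply hΦinj
      rw [hcomm γ, _root_.map_one]
      exact h
  have hgfin : Finite ↥g.range :=
    finite_range_GL hab (fun K fK h => hfield K fK h) g
  have hgker := finiteIndex_ker_of_finite_range g hgfin
  rw [hker] at hgker
  exact finite_range_of_finiteIndex_ker f hgker

end Helpers

/-- Non-linearity criterion: let `Γ` be a finitely generated group all of whose finite-index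
subgroups have finite abelianization.  If every homomorphism from `Γ` to `GL_n(K)`, for
every field `K` and `n ≥ 1`, has virtually solvable image, then every homomorphism from `Γ`
to `GL_n(R)`, for any commutative unital ring `R` and `n ≥ 1`, has finite image. -/
theorem finite_image_in_ringLinear_of_virtuallySolvable_fieldLinear
    (Γ : Type) [Group Γ] [Group.FG Γ]
    (hab : ∀ H : Subgroup Γ, H.FiniteIndex → Finite (Abelianization H))
    (hfield : ∀ (K : Type) (_ : Field K) (n : ℕ), 1 ≤ n →
      ∀ f : Γ →* Matrix.GeneralLinearGroup (Fin n) K, IsVirtuallySolvable ↥f.range)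
    (R : Type) (_ : CommRing R) (n : ℕ) (hn : 1 ≤ n)
    (f : Γ →* Matrix.GeneralLinearGroup (Fin n) R) :
    Finite ↥f.range := by
  rename_i instR
  exact @finite_image_in_ringLinear_aux R instR n Γ _ _ hab
    (fun K fK h => hfield K fK n hn h) f
end
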